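/- In a single-decision structural causal influence model, if the decision D is not an ancestor of a variable X, then for every policy π and every intervention value d, the potential response X_d equals X on every exogenous setting; consequently the nested counterfactual U_{X_d} equals U pointwise, so there is no instrumental control incentive on X. -/

import Mathlib

attribute [local instance] Classical.propDecidable

noncomputable section

/-- Acyclicity of a directed graph. -/
def Acyclic {V : Type} (E : V → V → Prop) : Prop := ∀ v, ¬ Relation.TransGen E v v

/-- A walk in the digraph: a nonempty list of vertices where consecutive
vertices are joined by an edge in some direction. -/
def IsWalk {V : Type} (E : V → V → Prop) (p : List V) : Prop :=
  p ≠ [] ∧ p.Chain' (fun a b => E a b ∨ E b a)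

/-- A consecutive triple `a, b, c` blocks a path w.r.t. `S` if `b` is a collider
with no descendant (including itself) in `S`, or a non-collider in `S`. -/
def BlockedTriple {V : Type} (E : V → V → Prop) (S : Set V) (a b c : V) : Prop :=
  (E a b ∧ E c b ∧ ∀ w, Relation.ReflTransGen E b w → w ∉ S) ∨
  (¬ (E a b ∧ E c b) ∧ b ∈ S)

/-- A path is d-separated (blocked) by `S`. -/
def BlocksPath {V : Type} (E : V → V → Prop) (S : Set V) (p : List V) : Prop :=
  (∃ x, p.head? = some x ∧ x ∈ S) ∨ (∃ x, p.getLast? = some x ∧ x ∈ S) ∨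
  (∃ l a b c r, p = l ++ a :: b :: c :: r ∧ BlockedTriple E S a b c)

/-- `A` is d-separated from `B` given `S`. -/
def DSep {V : Type} (E : V → V → Prop) (A B S : Set V) : Prop :=
  ∀ p : List V, IsWalk E p → (∃ a ∈ A, p.head? = some a) →
    (∃ b ∈ B, p.getLast? = some b) → BlocksPath E S p

/-- An observation `X ∈ Pa_D` is requisite in the graph `E` with decision `D` and
utility nodes `U` if it is d-connected to the downstream utilities `U ∩ Desc(D)`
given the other observations and the decision, `(Pa_D ∪ {D}) \ {X}`. -/
def RequisiteG {V : Type} (E : V → V → Prop) (D : V) (U : Set V) (X : V) : Prop :=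
  E X D ∧ ¬ DSep E {X} {u | u ∈ U ∧ Relation.ReflTransGen E D u}
      {v | (E v D ∧ v ≠ X) ∨ v = D}

/-- The edge relation of the minimal reduction: all information links from
nonrequisite observations are removed. -/
def ReducedEdge {V : Type} (E : V → V → Prop) (D : V) (U : Set V) : V → V → Prop :=
  fun a b => E a b ∧ (b = D → RequisiteG E D U a)

variable {V : Type} [Fintype V] [DecidableEq V]

/-- A single-decision structural causal influence model (SCIM): a causal
influence diagram (DAG with a decision node `D` and childless utility nodes
`Util` whose values are interpreted in `ℝ` via `utilReal`), finite nonempty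
domains, structural functions for all non-decision nodes depending only on
parents, and mutually independent finitely-supported exogenous variables. -/
structure SCIM (V : Type) [Fintype V] [DecidableEq V] where
  Edge : V → V → Prop
  acyclic : Acyclic Edge
  D : V
  Util : Finset V
  utilNotD : D ∉ Util
  utilNoChild : ∀ u ∈ Util, ∀ v, ¬ Edge u v
  Dom : V → Type
  domFin : ∀ v, Fintype (Dom v)
  domNE : ∀ v, Nonempty (Dom v)
  utilReal : (u : V) → Dom u → ℝ
  ExoDom : V → Type
  exoFin : ∀ v, Fintype (ExoDom v)
  exoNE : ∀ v, Nonempty (ExoDom v)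
  f : (v : V) → ((p : V) → Dom p) → ExoDom v → Dom v
  localDep : ∀ v a a' e, (∀ p, Edge p v → a p = a' p) → f v a e = f v a' e
  P : (v : V) → ExoDom v → ℝ
  Pnonneg : ∀ v e, 0 ≤ P v e
  Psum : ∀ v, ∑ e ∈ (exoFin v).elems, P v e = 1

namespace SCIM

variable (M : SCIM V)

/-- Joint (product) probability of an exogenous setting. -/
def Pjoint (ε : ∀ v, M.ExoDom v) : ℝ := ∏ v, M.P v (ε v)

/-- All exogenous settings. -/
def exoElems : Finset (∀ v, M.ExoDom v) :=
  letI := M.exoFin; Finset.univ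

/-- A default assignment of values. -/
def dflt : ∀ v, M.Dom v := fun v => (M.domNE v).some

/-- `a` solves the system of structural equations `g` at exogenous setting `ε`. -/
def Solves (g : (v : V) → ((p : V) → M.Dom p) → M.ExoDom v → M.Dom v)
    (ε : ∀ v, M.ExoDom v) (a : ∀ v, M.Dom v) : Prop :=
  ∀ v, a v = g v a (ε v)

/-- The (unique, by acyclicity) solution of the structural equations `g`
at `ε`: the values of all endogenous variables obtained by recursive
application of the structural functions. -/
def sol (g : (v : V) → ((p : V) → M.Dom p) → M.ExoDom v → M.Dom v)
    (ε : ∀ v, M.ExoDom v) : ∀ v, M.Dom v :=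
  if h : ∃ a, M.Solves g ε a then h.choose else M.dflt

/-- Replace the structural function at node `X` by `gX` (a soft intervention). -/
def replaceAt (g : (v : V) → ((p : V) → M.Dom p) → M.ExoDom v → M.Dom v) (X : V)
    (gX : ((p : V) → M.Dom p) → M.ExoDom X → M.Dom X) :
    (v : V) → ((p : V) → M.Dom p) → M.ExoDom v → M.Dom v :=
  fun v => if h : v = X then (by subst h; exact gX) else g v

/-- Hard intervention do(`X` = `x`): constant functions on `X`. -/
def doSet (g : (v : V) → ((p : V) → M.Dom p) → M.ExoDom v → M.Dom v)
    (X : Set V) (x : ∀ v, M.Dom v) :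
    (v : V) → ((p : V) → M.Dom p) → M.ExoDom v → M.Dom v :=
  fun v => if v ∈ X then fun _ _ => x v else g v

/-- A policy: a structural function for `D` that depends only on the
observations `Pa_D` (and the exogenous variable of `D`). -/
def IsPolicy (π : ((p : V) → M.Dom p) → M.ExoDom M.D → M.Dom M.D) : Prop :=
  ∀ a a' e, (∀ p, M.Edge p M.D → a p = a' p) → π a e = π a' e

/-- The policy-completed system of structural functions. -/
def gpol (π : ((p : V) → M.Dom p) → M.ExoDom M.D → M.Dom M.D) :
    (v : V) → ((p : V) → M.Dom p) → M.ExoDom v → M.Dom v :=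
  M.replaceAt M.f M.D π

/-- Total utility of an assignment: the sum of the utility-node values. -/
def TotalU (a : ∀ v, M.Dom v) : ℝ := ∑ u ∈ M.Util, M.utilReal u (a u)

/-- Expected total utility of a system of structural equations `g`. -/
def EUg (g : (v : V) → ((p : V) → M.Dom p) → M.ExoDom v → M.Dom v) : ℝ :=
  ∑ ε ∈ M.exoElems, M.Pjoint ε * M.TotalU (M.sol g ε)

/-- Expected total utility of a policy. -/
def EU (π : ((p : V) → M.Dom p) → M.ExoDom M.D → M.Dom M.D) : ℝ :=
  M.EUg (M.gpol π)

/-- An optimal policy maximizes expected total utility. -/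
def IsOptimal (π : ((p : V) → M.Dom p) → M.ExoDom M.D → M.Dom M.D) : Prop :=
  M.IsPolicy π ∧ ∀ π', M.IsPolicy π' → M.EU π' ≤ M.EU π

/-- Probability of an event over exogenous settings. -/
def PrEv (Ev : (∀ v, M.ExoDom v) → Prop) : ℝ :=
  ∑ ε ∈ M.exoElems, if Ev ε then M.Pjoint ε else 0

/-- Conditional expectation of `h` given the event `Ev`. -/
def condExp (h : (∀ v, M.ExoDom v) → ℝ) (Ev : (∀ v, M.ExoDom v) → Prop) : ℝ :=
  (∑ ε ∈ M.exoElems, if Ev ε then M.Pjoint ε * h ε else 0) / M.PrEv Ev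

/-- Conditional probability of `h` given `Ev`. -/
def condProb (h Ev : (∀ v, M.ExoDom v) → Prop) : ℝ :=
  M.PrEv (fun ε => h ε ∧ Ev ε) / M.PrEv Ev

/-- The event that the decision context (the observations `Pa_D`) takes the
values `pa`, under policy `π`. -/
def CtxEvent (π : ((p : V) → M.Dom p) → M.ExoDom M.D → M.Dom M.D)
    (pa : ∀ v, M.Dom v) (ε : ∀ v, M.ExoDom v) : Prop :=
  ∀ p, M.Edge p M.D → M.sol (M.gpol π) ε p = pa p

/-- The potential response under the hard intervention do(`X` = `x`),
in the policy-completed model: an assignment to all variables. -/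
def response (π : ((p : V) → M.Dom p) → M.ExoDom M.D → M.Dom M.D)
    (X : V) (x : M.Dom X) (ε : ∀ v, M.ExoDom v) : ∀ v, M.Dom v :=
  M.sol (M.doSet (M.gpol π) {X} (Function.update M.dflt X x)) ε

/-- The nested-counterfactual assignment realizing `U_{X_d}`: intervene on `X`
with the value `X_d(ε)` it would take under do(`D` = `d`). -/
def nestedSol (π : ((p : V) → M.Dom p) → M.ExoDom M.D → M.Dom M.D)
    (X : V) (d : M.Dom M.D) (ε : ∀ v, M.ExoDom v) : ∀ v, M.Dom v :=
  M.response π X (M.response π M.D d ε X) ε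

/-- Instrumental control incentive on `X`: in some decision context `pa`
(of positive probability), every optimal policy has
`E[U_{X_d} | pa] ≠ E[U | pa]` for some `d`. -/
def HasICI (X : V) : Prop :=
  ∃ pa : ∀ v, M.Dom v, ∀ π, M.IsOptimal π →
    0 < M.PrEv (M.CtxEvent π pa) ∧
    ∃ d : M.Dom M.D,
      M.condExp (fun ε => M.TotalU (M.nestedSol π X d ε)) (M.CtxEvent π pa) ≠
      M.condExp (fun ε => M.TotalU (M.sol (M.gpol π) ε)) (M.CtxEvent π pa)

/-- A policy that does not use the information link `X → D`. -/
def IsPolicyWithout (X : V)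
    (π : ((p : V) → M.Dom p) → M.ExoDom M.D → M.Dom M.D) : Prop :=
  M.IsPolicy π ∧ ∀ a a' e, (∀ p, M.Edge p M.D → p ≠ X → a p = a' p) → π a e = π a' e

/-- Counterfactual fairness of policy `π` w.r.t. sensitive attribute `A`:
`Pr(D_{a'} = d | pa_D, a) = Pr(D = d | pa_D, a)` for all `d`, contexts `pa_D`,
and attribute values `a, a'` with positive probability of the conditioning event. -/
def CFair (π : ((p : V) → M.Dom p) → M.ExoDom M.D → M.Dom M.D) (A : V) : Prop :=
  ∀ (d : M.Dom M.D) (pa : ∀ v, M.Dom v) (a a' : M.Dom A),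
    0 < M.PrEv (fun ε => M.CtxEvent π pa ε ∧ M.sol (M.gpol π) ε A = a) →
    M.condProb (fun ε => M.response π A a' ε M.D = d)
        (fun ε => M.CtxEvent π pa ε ∧ M.sol (M.gpol π) ε A = a) =
    M.condProb (fun ε => M.sol (M.gpol π) ε M.D = d)
        (fun ε => M.CtxEvent π pa ε ∧ M.sol (M.gpol π) ε A = a)

/-! ### Auxiliary lemmas -/

section Aux

variable {V : Type} [Fintype V] [DecidableEq V] (M : SCIM V)

/-- A system of structural functions is local if each function depends only on parents. -/
def LocalG (g : (v : V) → ((p : V) → M.Dom p) → M.ExoDom v → M.Dom v) : Prop :=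
  ∀ v a a' e, (∀ p, M.Edge p v → a p = a' p) → g v a e = g v a' e

lemma edge_wf : WellFounded M.Edge := by
  haveI : IsTrans V (Relation.TransGen M.Edge) := ⟨fun _ _ _ => Relation.TransGen.trans⟩
  haveI : IsIrrefl V (Relation.TransGen M.Edge) := ⟨M.acyclic⟩
  exact Subrelation.wf (fun h => Relation.TransGen.single h)
    (Finite.wellFounded_of_trans_of_irrefl (Relation.TransGen M.Edge))

/-- A recursively defined solution. -/
def solAux (g : (v : V) → ((p : V) → M.Dom p) → M.ExoDom v → M.Dom v)
    (ε : ∀ v, M.ExoDom v) : ∀ v, M.Dom v :=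
  M.edge_wf.fix (C := fun v => M.Dom v)
    (fun v ih => g v (fun p => if h : M.Edge p v then ih p h else M.dflt p) (ε v))

lemma solAux_solves {g} (hg : M.LocalG g) (ε : ∀ v, M.ExoDom v) :
    M.Solves g ε (M.solAux g ε) := by
  intro v
  rw [solAux, WellFounded.fix_eq]
  exact hg v _ _ (ε v) (fun p hp => by simp [hp, solAux])

lemma solves_unique {g} (hg : M.LocalG g) {ε a b}
    (ha : M.Solves g ε a) (hb : M.Solves g ε b) : a = b := by
  funext v
  induction v using (M.edge_wf).induction with
  | _ v ih =>
    rw [ha v, hb v]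
    exact hg v a b (ε v) ih

lemma sol_solves {g} (hg : M.LocalG g) (ε : ∀ v, M.ExoDom v) :
    M.Solves g ε (M.sol g ε) := by
  rw [SCIM.sol, dif_pos ⟨_, M.solAux_solves hg ε⟩]
  exact (Exists.choose_spec (⟨_, M.solAux_solves hg ε⟩ : ∃ a, M.Solves g ε a))

lemma sol_eq_of_solves {g} (hg : M.LocalG g) {ε a} (ha : M.Solves g ε a) :
    M.sol g ε = a :=
  M.solves_unique hg (M.sol_solves hg ε) ha

/-- Solutions agree on an ancestrally closed set where the systems agree. -/
lemma sol_agree {g g'} (hg : M.LocalG g) (hg' : M.LocalG g') (S : Set V)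
    (hS : ∀ v ∈ S, ∀ p, M.Edge p v → p ∈ S)
    (hgg : ∀ v ∈ S, g v = g' v) (ε : ∀ v, M.ExoDom v) :
    ∀ v ∈ S, M.sol g ε v = M.sol g' ε v := by
  intro v
  induction v using (M.edge_wf).induction with
  | _ v ih =>
    intro hv
    rw [M.sol_solves hg ε v, M.sol_solves hg' ε v, hgg v hv]
    exact hg' v _ _ (ε v) (fun p hp => ih p hp (hS v hv p hp))

lemma local_gpol {π} (hπ : M.IsPolicy π) : M.LocalG (M.gpol π) := by
  intro v a a' e h
  by_cases hv : v = M.D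
  · subst hv
    simp only [SCIM.gpol, SCIM.replaceAt, dif_pos rfl]
    exact hπ a a' e h
  · simp only [SCIM.gpol, SCIM.replaceAt, dif_neg hv]
    exact M.localDep v a a' e h

lemma local_doSet {g} (hg : M.LocalG g) (Xs : Set V) (x : ∀ v, M.Dom v) :
    M.LocalG (M.doSet g Xs x) := by
  intro v a a' e h
  by_cases hv : v ∈ Xs
  · simp [SCIM.doSet, hv]
  · simpa [SCIM.doSet, hv] using hg v a a' e h

end Aux

end SCIM

/-- if the decision `D` is not an ancestor of `X`, then for every
policy `π` and decision value `d`, the potential response `X_d` equals `X` on every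
exogenous setting; consequently the nested counterfactual `U_{X_d}` equals `U`
pointwise, and there is no instrumental control incentive on `X`. -/
theorem no_ici_of_not_descendant {V : Type} [Fintype V] [DecidableEq V]
    (M : SCIM V) (X : V) (hX : ¬ Relation.ReflTransGen M.Edge M.D X) :
    (∀ π, M.IsPolicy π → ∀ (d : M.Dom M.D) (ε : ∀ v, M.ExoDom v),
      M.response π M.D d ε X = M.sol (M.gpol π) ε X ∧
      M.TotalU (M.nestedSol π X d ε) = M.TotalU (M.sol (M.gpol π) ε)) ∧
    ¬ M.HasICI X := by
  have key : ∀ π, M.IsPolicy π → ∀ (d : M.Dom M.D) (ε : ∀ v, M.ExoDom v),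
      M.response π M.D d ε X = M.sol (M.gpol π) ε X ∧
      M.nestedSol π X d ε = M.sol (M.gpol π) ε := by
    intro π hπ d ε
    have hg : M.LocalG (M.gpol π) := M.local_gpol hπ
    -- Part 1: intervening on D does not change X
    have h1 : M.response π M.D d ε X = M.sol (M.gpol π) ε X := by
      have := M.sol_agree (g := M.doSet (M.gpol π) {M.D} (Function.update M.dflt M.D d))
        (g' := M.gpol π)
        (M.local_doSet hg _ _) hg
        {v | Relation.ReflTransGen M.Edge v X}
        (fun v hv p hp => Relation.ReflTransGen.head hp hv)
        (fun v hv => by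
          have hvD : v ≠ M.D := fun h => hX (h ▸ hv)
          simp [SCIM.doSet, hvD]) ε X Relation.ReflTransGen.refl
      simpa [SCIM.response] using this
    refine ⟨h1, ?_⟩
    -- Part 2: intervening on X with its actual value changes nothing
    set x : M.Dom X := M.response π M.D d ε X with hx
    have hsv : M.Solves (M.doSet (M.gpol π) {X} (Function.update M.dflt X x)) ε
        (M.sol (M.gpol π) ε) := by
      intro v
      by_cases hv : v = X
      · subst hv
        simp [SCIM.doSet, ← h1]
      · simpa [SCIM.doSet, hv] using M.sol_solves hg ε v
    have : M.sol (M.doSet (M.gpol π) {X} (Function.update M.dflt X x)) ε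
        = M.sol (M.gpol π) ε :=
      M.sol_eq_of_solves (M.local_doSet hg _ _) hsv
    exact this
  refine ⟨fun π hπ d ε => ⟨(key π hπ d ε).1, by rw [(key π hπ d ε).2]⟩, ?_⟩
  -- No instrumental control incentive
  rintro ⟨pa, hpa⟩
  -- there exists an optimal policy
  haveI := M.domFin; haveI := M.exoFin; haveI := M.domNE; haveI := M.exoNE
  obtain ⟨π, hπs, hopt⟩ := Finset.exists_max_image
    (Finset.univ.filter M.IsPolicy) M.EU
    ⟨fun _ _ => (M.domNE M.D).some, by
      simp only [Finset.mem_filter, Finset.mem_univ, true_and]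
      exact fun _ _ _ _ => rfl⟩
  have hπ : M.IsPolicy π := (Finset.mem_filter.mp hπs).2
  have hoptπ : M.IsOptimal π := ⟨hπ, fun π' hπ' =>
    hopt π' (Finset.mem_filter.mpr ⟨Finset.mem_univ _, hπ'⟩)⟩
  obtain ⟨-, d, hne⟩ := hpa π hoptπ
  exact hne (by
    congr 1
    funext ε
    rw [(key π hπ d ε).2])
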